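/- Let K be an irreducible, aperiodic, substochastic kernel on a countable state space S with spectral radius ρ. If for some x ∈ S there is a probability measure π_x on S with K^n(x,y)/K^n(x,S) → π_x(y) for all y ∈ S, then for every y ∈ S, K^{n+1}(x,y)/K^n(x,y) → ρ. -/

import Mathlib

open Filter Topology

open scoped Classical in
/-- Matrix powers of a kernel `K` on a countable state space. -/
noncomputable def Kpow {S : Type*} (K : S → S → ℝ) : ℕ → S → S → ℝ
  | 0 => fun x y => if x = y then 1 else 0
  | n + 1 => fun x y => ∑' z, Kpow K n x z * K z y

/-- Lower semicontinuity of `∑' z, φ n z * g z` under pointwise convergence. -/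
lemma scheffe_lower {S : Type*} (φ : ℕ → S → ℝ) (p g : S → ℝ)
    (hφnn : ∀ n z, 0 ≤ φ n z) (hφs : ∀ n, Summable (φ n))
    (hpnn : ∀ z, 0 ≤ p z) (hps : Summable p)
    (hgnn : ∀ z, 0 ≤ g z) (hgle : ∀ z, g z ≤ 1)
    (hconv : ∀ z, Tendsto (fun n => φ n z) atTop (𝓝 (p z)))
    {ε : ℝ} (hε : 0 < ε) :
    ∀ᶠ n in atTop, ∑' z, p z * g z - ε ≤ ∑' z, φ n z * g z := by
  have hpg : Summable fun z => p z * g z :=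
    hps.of_nonneg_of_le (fun z => mul_nonneg (hpnn z) (hgnn z))
      (fun z => mul_le_of_le_one_right (hpnn z) (hgle z))
  obtain ⟨F, hF⟩ : ∃ F : Finset S, (∑' z, p z * g z) - ε / 2 < ∑ z ∈ F, p z * g z := by
    have h := hpg.hasSum.eventually (eventually_gt_nhds
      (by linarith : (∑' z, p z * g z) - ε / 2 < ∑' z, p z * g z))
    exact h.exists
  have hfin : Tendsto (fun n => ∑ z ∈ F, φ n z * g z) atTop (𝓝 (∑ z ∈ F, p z * g z)) :=
    tendsto_finset_sum _ fun z _ => (hconv z).mul_const (g z)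
  have h2 := hfin.eventually (eventually_gt_nhds
    (by linarith : (∑ z ∈ F, p z * g z) - ε / 2 < ∑ z ∈ F, p z * g z))
  filter_upwards [h2] with n hn
  have h3 : ∑ z ∈ F, φ n z * g z ≤ ∑' z, φ n z * g z :=
    Summable.sum_le_tsum F (fun z _ => mul_nonneg (hφnn n z) (hgnn z))
      ((hφs n).of_nonneg_of_le (fun z => mul_nonneg (hφnn n z) (hgnn z))
        (fun z => mul_le_of_le_one_right (hφnn n z) (hgle z)))
  linarith

/-- Scheffé-type lemma: pointwise convergence of probability weights gives
convergence of sums against `[0,1]`-valued functions. -/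
lemma scheffe {S : Type*} (φ : ℕ → S → ℝ) (p g : S → ℝ)
    (hφnn : ∀ n z, 0 ≤ φ n z) (hφs : ∀ n, Summable (φ n)) (hφ1 : ∀ n, ∑' z, φ n z = 1)
    (hpnn : ∀ z, 0 ≤ p z) (hps : Summable p) (hp1 : ∑' z, p z = 1)
    (hgnn : ∀ z, 0 ≤ g z) (hgle : ∀ z, g z ≤ 1)
    (hconv : ∀ z, Tendsto (fun n => φ n z) atTop (𝓝 (p z))) :
    Tendsto (fun n => ∑' z, φ n z * g z) atTop (𝓝 (∑' z, p z * g z)) := by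
  rw [Metric.tendsto_atTop]
  intro ε hε
  have h1 := scheffe_lower φ p g hφnn hφs hpnn hps hgnn hgle hconv
    (by linarith : (0:ℝ) < ε/4)
  have h2 := scheffe_lower φ p (fun z => 1 - g z) hφnn hφs hpnn hps
    (fun z => by linarith [hgle z]) (fun z => by linarith [hgnn z])
    hconv (by linarith : (0:ℝ) < ε/4)
  have key : ∀ (q : S → ℝ), (∀ z, 0 ≤ q z) → Summable q → (∑' z, q z = 1) →
      ∑' z, q z * (1 - g z) = 1 - ∑' z, q z * g z := by
    intro q hqnn hqs hq1
    have hqg : Summable fun z => q z * g z :=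
      hqs.of_nonneg_of_le (fun z => mul_nonneg (hqnn z) (hgnn z))
        (fun z => mul_le_of_le_one_right (hqnn z) (hgle z))
    calc ∑' z, q z * (1 - g z) = ∑' z, (q z - q z * g z) := by
          congr 1; funext z; ring
      _ = (∑' z, q z) - ∑' z, q z * g z := Summable.tsum_sub hqs hqg
      _ = 1 - ∑' z, q z * g z := by rw [hq1]
  rw [key p hpnn hps hp1] at h2
  have h2' : ∀ᶠ n in atTop, ∑' z, φ n z * g z ≤ (∑' z, p z * g z) + ε / 4 := by
    filter_upwards [h2] with n hn
    rw [key (φ n) (hφnn n) (hφs n) (hφ1 n)] at hn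
    linarith
  obtain ⟨N, hN⟩ := eventually_atTop.1 (h1.and h2')
  exact ⟨N, fun n hn => by
    obtain ⟨ha, hb⟩ := hN n hn
    rw [Real.dist_eq, abs_lt]
    constructor <;> linarith⟩

/-- A positive sequence whose `n`-th roots tend to `ρ` cannot eventually grow by a
factor `B > ρ^q` every `q` steps. -/
lemma no_fast_growth (a : ℕ → ℝ) (ρ : ℝ) (hρpos : 0 < ρ)
    (hapos : ∀ᶠ n in atTop, 0 < a n)
    (hroot : Tendsto (fun n : ℕ => a n ^ ((n : ℝ)⁻¹)) atTop (𝓝 ρ))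
    (q : ℕ) (hq : 0 < q) (B : ℝ) (hB : ρ ^ q < B) :
    ¬ ∀ᶠ n in atTop, B * a n ≤ a (n + q) := by
  intro h
  have hBpos : 0 < B := lt_of_le_of_lt (le_of_lt (pow_pos hρpos q)) hB
  obtain ⟨N, hN⟩ := eventually_atTop.1 (h.and hapos)
  have haN : 0 < a N := (hN N le_rfl).2
  have key : ∀ k : ℕ, B ^ k * a N ≤ a (N + k * q) := by
    intro k
    induction k with
    | zero => simp
    | succ k ih =>
      have h1 : B * a (N + k * q) ≤ a (N + k * q + q) :=
        (hN (N + k * q) (Nat.le_add_right _ _)).1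
      have h2 : B * (B ^ k * a N) ≤ B * a (N + k * q) :=
        mul_le_mul_of_nonneg_left ih (le_of_lt hBpos)
      have heq : N + (k + 1) * q = N + k * q + q := by ring
      rw [heq]
      calc B ^ (k + 1) * a N = B * (B ^ k * a N) := by ring
        _ ≤ B * a (N + k * q) := h2
        _ ≤ a (N + k * q + q) := h1
  set φ : ℕ → ℕ := fun k => N + k * q with hφ
  have hφmono : StrictMono φ := by
    intro i j hij
    simp only [hφ]
    have : i * q < j * q := Nat.mul_lt_mul_of_lt_of_le hij le_rfl hq
    omega
  have hsub : Tendsto (fun k => a (φ k) ^ ((φ k : ℝ)⁻¹)) atTop (𝓝 ρ) :=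
    hroot.comp hφmono.tendsto_atTop
  set L : ℝ := Real.exp (Real.log B / q) with hL
  have hlow : Tendsto (fun k => (B ^ k * a N) ^ ((φ k : ℝ)⁻¹)) atTop (𝓝 L) := by
    have hpos' : ∀ k, (0:ℝ) < B ^ k * a N := fun k => mul_pos (pow_pos hBpos k) haN
    have heq : ∀ k : ℕ, 1 ≤ k → (B ^ k * a N) ^ ((φ k : ℝ)⁻¹)
        = Real.exp ((Real.log B + Real.log (a N) / k) / ((N : ℝ) / k + q)) := by
      intro k hk
      have hk0 : (k : ℝ) ≠ 0 := Nat.cast_ne_zero.2 (by omega)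
      rw [Real.rpow_def_of_pos (hpos' k)]
      congr 1
      rw [Real.log_mul (pow_ne_zero k (ne_of_gt hBpos)) (ne_of_gt haN), Real.log_pow]
      have hφk : ((φ k : ℕ) : ℝ) = (N : ℝ) + k * q := by
        simp only [hφ]
        push_cast
        ring
      rw [hφk]
      field_simp
    have hexp : Tendsto (fun k : ℕ => (Real.log B + Real.log (a N) / k) / ((N : ℝ) / k + q))
        atTop (𝓝 (Real.log B / q)) := by
      have h1 : Tendsto (fun k : ℕ => Real.log (a N) / k) atTop (𝓝 0) :=
        tendsto_const_div_atTop_nhds_zero_nat _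
      have h2 : Tendsto (fun k : ℕ => (N : ℝ) / k) atTop (𝓝 0) :=
        tendsto_const_div_atTop_nhds_zero_nat _
      have hnum : Tendsto (fun k : ℕ => Real.log B + Real.log (a N) / k) atTop
          (𝓝 (Real.log B)) := by simpa using tendsto_const_nhds.add h1
      have hden : Tendsto (fun k : ℕ => (N : ℝ) / k + q) atTop (𝓝 (q : ℝ)) := by
        simpa using h2.add tendsto_const_nhds
      have hq0 : (q : ℝ) ≠ 0 := Nat.cast_ne_zero.2 (by omega)
      exact hnum.div hden hq0
    have hcomp := (Real.continuous_exp.tendsto _).comp hexp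
    apply hcomp.congr'
    filter_upwards [eventually_ge_atTop 1] with k hk
    exact (heq k hk).symm
  have hle : L ≤ ρ := by
    apply le_of_tendsto_of_tendsto' hlow hsub
    intro k
    apply Real.rpow_le_rpow (le_of_lt (mul_pos (pow_pos hBpos k) haN)) (key k)
    positivity
  have hgt : ρ < L := by
    have h1 : Real.log (ρ ^ q) < Real.log B :=
      Real.log_lt_log (pow_pos hρpos q) hB
    rw [Real.log_pow] at h1
    have h2 : Real.log ρ < Real.log B / q := by
      rw [lt_div_iff₀ (by exact_mod_cast hq : (0:ℝ) < (q:ℝ))]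
      nlinarith [h1]
    calc ρ = Real.exp (Real.log ρ) := (Real.exp_log hρpos).symm
      _ < Real.exp (Real.log B / q) := Real.exp_lt_exp.2 h2
      _ = L := rfl
  linarith

set_option maxHeartbeats 2000000 in
/-- If an irreducible, aperiodic, substochastic kernel with convergence norm `ρ`
has a Yaglom limit `π` starting from `x`, then `K^{n+1}(x,y)/K^n(x,y) → ρ` for every `y`. -/
theorem yaglom_pointwise_ratio {S : Type*} [Countable S] (K : S → S → ℝ)
    (hnn : ∀ x y, 0 ≤ K x y)
    (hsub : ∀ x, ∑' y, K x y ≤ 1)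
    (hirr : ∀ x y : S, ∃ n, 0 < Kpow K n x y)
    (haper : ∀ x : S, ∀ m : ℕ, (∀ n, 0 < n → 0 < Kpow K n x x → m ∣ n) → m = 1)
    (ρ : ℝ) (hρpos : 0 < ρ) (hρle : ρ ≤ 1)
    (hρ : ∀ x y : S,
      Tendsto (fun n : ℕ => (Kpow K n x y) ^ ((n : ℝ)⁻¹)) atTop (𝓝 ρ))
    (x : S) (π : S → ℝ) (hπnn : ∀ y, 0 ≤ π y) (hπ1 : ∑' y, π y = 1)
    (hyag : ∀ y : S,
      Tendsto (fun n : ℕ => Kpow K n x y / ∑' z, Kpow K n x z) atTop (𝓝 (π y))) :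
    ∀ y : S,
      Tendsto (fun n : ℕ => Kpow K (n + 1) x y / Kpow K n x y) atTop (𝓝 ρ) := by
  classical
  -- nonnegativity of Kpow
  have hKp : ∀ (n : ℕ) (u v : S), 0 ≤ Kpow K n u v := by
    intro n
    induction n with
    | zero =>
      intro u v
      simp only [Kpow]
      split <;> norm_num
    | succ n ih =>
      intro u v
      exact tsum_nonneg fun z => mul_nonneg (ih u z) (hnn z v)
  have hKsucc : ∀ (n : ℕ) (u v : S), Kpow K (n+1) u v = ∑' z, Kpow K n u z * K z v :=
    fun n u v => rfl
  -- eventual positivity of all entries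
  have hpos : ∀ u v : S, ∀ᶠ n in atTop, 0 < Kpow K n u v := by
    intro u v
    have h1 : ∀ᶠ n in atTop, ρ / 2 < Kpow K n u v ^ ((n:ℝ)⁻¹) :=
      (hρ u v).eventually (eventually_gt_nhds (by linarith))
    filter_upwards [h1, eventually_ge_atTop 1] with n hn hn1
    rcases (hKp n u v).lt_or_eq with h | h
    · exact h
    · exfalso
      rw [← h, Real.zero_rpow (inv_ne_zero (Nat.cast_ne_zero.2 (by omega)))] at hn
      linarith
  -- chain extraction
  have hchainex : ∀ (m : ℕ) (u v : S), 0 < Kpow K m u v →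
      ∃ c : ℕ → S, c 0 = u ∧ c m = v ∧ ∀ i < m, 0 < K (c i) (c (i+1)) := by
    intro m
    induction m with
    | zero =>
      intro u v h
      have huv : u = v := by
        by_contra h'
        simp only [Kpow, if_neg h'] at h
        exact lt_irrefl 0 h
      exact ⟨fun _ => u, rfl, huv, fun i hi => absurd hi (Nat.not_lt_zero i)⟩
    | succ m ih =>
      intro u v h
      rw [hKsucc] at h
      have hterm : ∃ w, 0 < Kpow K m u w * K w v := by
        by_contra hc
        push_neg at hc
        have hzero : (fun w => Kpow K m u w * K w v) = fun _ => (0:ℝ) :=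
          funext fun w => le_antisymm (hc w) (mul_nonneg (hKp m u w) (hnn w v))
        rw [hzero] at h
        simp at h
      obtain ⟨w, hw⟩ := hterm
      have h1 : 0 < Kpow K m u w := by
        rcases (hKp m u w).lt_or_eq with h1 | h1
        · exact h1
        · exfalso; rw [← h1, zero_mul] at hw; exact lt_irrefl 0 hw
      have h2 : 0 < K w v := by
        rcases (hnn w v).lt_or_eq with h2 | h2
        · exact h2
        · exfalso; rw [← h2, mul_zero] at hw; exact lt_irrefl 0 hw
      obtain ⟨c, hc0, hcm, hsteps⟩ := ih u w h1
      refine ⟨fun i => if i = m + 1 then v else c i, ?_, ?_, ?_⟩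
      · show (if 0 = m + 1 then v else c 0) = u
        rw [if_neg (by omega : ¬ 0 = m + 1)]
        exact hc0
      · show (if m + 1 = m + 1 then v else c (m+1)) = v
        rw [if_pos rfl]
      · intro i hi
        show 0 < K (if i = m + 1 then v else c i) (if i + 1 = m + 1 then v else c (i+1))
        rcases Nat.lt_succ_iff_lt_or_eq.1 hi with hi' | hi'
        · rw [if_neg (by omega : ¬ i = m + 1), if_neg (by omega : ¬ i + 1 = m + 1)]
          exact hsteps i hi'
        · subst hi'
          rw [if_neg (by omega : ¬ i = i + 1), if_pos rfl, hcm]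
          exact h2
  -- the total mass sequence
  set a : ℕ → ℝ := fun n => ∑' z, Kpow K n x z with ha
  have hyagA : ∀ y : S, Tendsto (fun n => Kpow K n x y / a n) atTop (𝓝 (π y)) := by
    intro y
    simp only [ha]
    exact hyag y
  have hannn : ∀ n, 0 ≤ a n := fun n => by
    simp only [ha]; exact tsum_nonneg fun z => hKp n x z
  -- a positive state for π
  obtain ⟨y₀, hy₀⟩ : ∃ y, 0 < π y := by
    by_contra hc
    push_neg at hc
    have hz : π = fun _ => 0 := funext fun y => le_antisymm (hc y) (hπnn y)
    rw [hz] at hπ1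
    simp at hπ1
  -- eventual summability and positivity of a
  have hNa : ∀ᶠ n in atTop, Summable (fun z => Kpow K n x z) ∧ 0 < a n ∧
      π y₀ / 2 * a n ≤ Kpow K n x y₀ := by
    have h1 : ∀ᶠ n in atTop, π y₀ / 2 < Kpow K n x y₀ / a n :=
      (hyagA y₀).eventually (eventually_gt_nhds (half_lt_self hy₀))
    filter_upwards [h1] with n hn
    have han : a n ≠ 0 := by
      intro h0
      rw [h0, div_zero] at hn
      linarith
    have hs : Summable fun z => Kpow K n x z := by
      by_contra hs
      exact han (by simp only [ha]; exact tsum_eq_zero_of_not_summable hs)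
    have hpos' : 0 < a n := lt_of_le_of_ne (hannn n) (Ne.symm han)
    exact ⟨hs, hpos', le_of_lt ((lt_div_iff₀ hpos').1 hn)⟩
  -- root convergence for a
  have hainv : Tendsto (fun n : ℕ => ((n:ℝ))⁻¹) atTop (𝓝 0) :=
    tendsto_inv_atTop_nhds_zero_nat
  have haroot : Tendsto (fun n => a n ^ ((n:ℝ)⁻¹)) atTop (𝓝 ρ) := by
    have hcpos : (0:ℝ) < 2 / π y₀ := by positivity
    have h1 : Tendsto (fun n : ℕ => (2 / π y₀) ^ ((n:ℝ)⁻¹)) atTop (𝓝 1) := by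
      have := Filter.Tendsto.rpow (tendsto_const_nhds (x := 2 / π y₀)) hainv
        (Or.inl (ne_of_gt hcpos))
      simpa using this
    have hup : Tendsto (fun n : ℕ => (2 / π y₀) ^ ((n:ℝ)⁻¹) * Kpow K n x y₀ ^ ((n:ℝ)⁻¹))
        atTop (𝓝 ρ) := by
      simpa using h1.mul (hρ x y₀)
    apply tendsto_of_tendsto_of_tendsto_of_le_of_le' (hρ x y₀) hup
    · filter_upwards [hNa] with n hn
      apply Real.rpow_le_rpow (hKp n x y₀) _ (by positivity)
      simp only [ha]
      exact Summable.le_tsum hn.1 y₀ fun z _ => hKp n x z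
    · filter_upwards [hNa] with n hn
      have h2 : a n ≤ 2 / π y₀ * Kpow K n x y₀ := by
        have h3 := mul_le_mul_of_nonneg_left hn.2.2 (le_of_lt hcpos)
        calc a n = 2 / π y₀ * (π y₀ / 2 * a n) := by
              field_simp
          _ ≤ 2 / π y₀ * Kpow K n x y₀ := h3
      calc a n ^ ((n:ℝ)⁻¹) ≤ (2 / π y₀ * Kpow K n x y₀) ^ ((n:ℝ)⁻¹) :=
            Real.rpow_le_rpow (hannn n) h2 (by positivity)
        _ = (2 / π y₀) ^ ((n:ℝ)⁻¹) * Kpow K n x y₀ ^ ((n:ℝ)⁻¹) :=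
            Real.mul_rpow (le_of_lt hcpos) (hKp n x y₀)
  -- eventual one-step Chapman-Kolmogorov
  have hone : ∀ y : S, ∀ᶠ n in atTop,
      Summable (fun z => Kpow K n x z * K z y) ∧
      ∀ z, Kpow K n x z * K z y ≤ Kpow K (n+1) x y := by
    intro y
    obtain ⟨N, hN⟩ := eventually_atTop.1 (hpos x y)
    filter_upwards [eventually_ge_atTop N] with n hn
    have hp : 0 < Kpow K (n+1) x y := hN (n+1) (by omega)
    have hs : Summable fun z => Kpow K n x z * K z y := by
      by_contra hs
      rw [hKsucc n x y, tsum_eq_zero_of_not_summable hs] at hp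
      exact lt_irrefl 0 hp
    refine ⟨hs, fun z => ?_⟩
    rw [hKsucc n x y]
    exact Summable.le_tsum hs z fun w _ => mul_nonneg (hKp n x w) (hnn w y)
  -- eventual chain inequality
  have hchain : ∀ (m : ℕ) (c : ℕ → S), (∀ i < m, 0 < K (c i) (c (i+1))) →
      ∀ᶠ n in atTop,
        Kpow K n x (c 0) * ∏ i ∈ Finset.range m, K (c i) (c (i+1)) ≤
          Kpow K (n+m) x (c m) := by
    intro m
    induction m with
    | zero =>
      intro c _
      filter_upwards with n
      simp
    | succ m ih =>
      intro c hsteps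
      have h1 := ih c fun i hi => hsteps i (by omega)
      obtain ⟨N, hN⟩ := eventually_atTop.1 (hone (c (m+1)))
      filter_upwards [h1, eventually_ge_atTop N] with n hn1 hn2
      have h2 := (hN (n+m) (by omega)).2 (c m)
      have h3 : Kpow K n x (c 0) * ∏ i ∈ Finset.range (m+1), K (c i) (c (i+1))
          = (Kpow K n x (c 0) * ∏ i ∈ Finset.range m, K (c i) (c (i+1))) *
            K (c m) (c (m+1)) := by
        rw [Finset.prod_range_succ]; ring
      rw [h3]
      calc (Kpow K n x (c 0) * ∏ i ∈ Finset.range m, K (c i) (c (i+1))) * K (c m) (c (m+1))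
          ≤ Kpow K (n+m) x (c m) * K (c m) (c (m+1)) :=
            mul_le_mul_of_nonneg_right hn1 (hnn (c m) (c (m+1)))
        _ ≤ Kpow K ((n+m)+1) x (c (m+1)) := h2
  -- all rows are summable
  have hrow : ∀ z : S, Summable fun y => K z y := by
    intro z
    by_contra hns
    obtain ⟨m, hm⟩ := (hpos y₀ z).exists
    obtain ⟨c, hc0, hcm, hsteps⟩ := hchainex m y₀ z hm
    set P : ℝ := ∏ i ∈ Finset.range m, K (c i) (c (i+1)) with hP
    have hPpos : 0 < P := Finset.prod_pos fun i hi => hsteps i (Finset.mem_range.1 hi)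
    have hG : ∀ C : ℝ, ∃ G : Finset S, C < ∑ y ∈ G, K z y := by
      intro C
      by_contra hC
      push_neg at hC
      exact hns (summable_of_sum_le (fun y => hnn z y) hC)
    obtain ⟨G, hGsum⟩ := hG ((ρ ^ (m+1) + 1) / (π y₀ / 2 * P))
    have hGpos : 0 < ∑ y ∈ G, K z y :=
      lt_of_le_of_lt (by positivity) hGsum
    have hfac : ρ ^ (m+1) + 1 ≤ π y₀ / 2 * P * ∑ y ∈ G, K z y := by
      rw [div_lt_iff₀ (by positivity)] at hGsum
      rw [mul_comm] at hGsum
      linarith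
    have hev : ∀ᶠ n in atTop, (ρ ^ (m+1) + 1) * a n ≤ a (n + (m+1)) := by
      have hone' : ∀ᶠ n in atTop, ∀ y ∈ G,
          Summable (fun w => Kpow K (n+m) x w * K w y) ∧
          ∀ w, Kpow K (n+m) x w * K w y ≤ Kpow K (n+m+1) x y := by
        rw [eventually_all_finset]
        intro y hy
        obtain ⟨N, hN⟩ := eventually_atTop.1 (hone y)
        filter_upwards [eventually_ge_atTop N] with n hn
        exact hN (n+m) (by omega)
      have hchain' := hchain m c hsteps
      have hsum' : ∀ᶠ n in atTop, Summable (fun w => Kpow K (n+m+1) x w) := by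
        obtain ⟨N, hN⟩ := eventually_atTop.1 hNa
        filter_upwards [eventually_ge_atTop N] with n hn
        exact (hN (n+m+1) (by omega)).1
      filter_upwards [hone', hchain', hsum', hNa] with n h1 h2 h3 h4
      have e1 : ∑ y ∈ G, Kpow K (n+m+1) x y ≤ a (n+m+1) := by
        simp only [ha]
        exact Summable.sum_le_tsum G (fun y _ => hKp _ x y) h3
      have e3 : Kpow K (n+m) x z * ∑ y ∈ G, K z y ≤ ∑ y ∈ G, Kpow K (n+m+1) x y := by
        rw [Finset.mul_sum]
        exact Finset.sum_le_sum fun y hy => (h1 y hy).2 z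
      have e4 : Kpow K n x y₀ * P ≤ Kpow K (n+m) x z := by
        rw [hc0, hcm, ← hP] at h2
        exact h2
      have e5 : π y₀ / 2 * a n ≤ Kpow K n x y₀ := h4.2.2
      have e6 : 0 ≤ a n := le_of_lt h4.2.1
      calc (ρ ^ (m+1) + 1) * a n
          ≤ (π y₀ / 2 * P * ∑ y ∈ G, K z y) * a n := mul_le_mul_of_nonneg_right hfac e6
        _ = (π y₀ / 2 * a n) * (P * ∑ y ∈ G, K z y) := by ring
        _ ≤ Kpow K n x y₀ * (P * ∑ y ∈ G, K z y) :=
            mul_le_mul_of_nonneg_right e5 (mul_nonneg hPpos.le hGpos.le)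
        _ = (Kpow K n x y₀ * P) * ∑ y ∈ G, K z y := by ring
        _ ≤ Kpow K (n+m) x z * ∑ y ∈ G, K z y :=
            mul_le_mul_of_nonneg_right e4 hGpos.le
        _ ≤ ∑ y ∈ G, Kpow K (n+m+1) x y := e3
        _ ≤ a (n+m+1) := e1
    exact no_fast_growth a ρ hρpos (hNa.mono fun n hn => hn.2.1) haroot (m+1)
      (Nat.succ_pos m) _ (by linarith) hev
  -- consequences of row summability
  have hK1 : ∀ z y, K z y ≤ 1 := fun z y =>
    le_trans (Summable.le_tsum (hrow z) y fun w _ => hnn z w) (hsub z)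
  have hκnn : ∀ z, (0:ℝ) ≤ ∑' y, K z y := fun z => tsum_nonneg (hnn z)
  have hFgen : ∀ n, Summable (fun z => Kpow K n x z) →
      Summable fun p : S × S => Kpow K n x p.1 * K p.1 p.2 := by
    intro n hsumn
    have hnnF : (0 : S × S → ℝ) ≤ fun p : S × S => Kpow K n x p.1 * K p.1 p.2 :=
      fun p => mul_nonneg (hKp n x p.1) (hnn p.1 p.2)
    rw [summable_prod_of_nonneg hnnF]
    constructor
    · intro z
      show Summable fun y => Kpow K n x z * K z y
      exact (hrow z).mul_left _
    · refine Summable.of_nonneg_of_le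
        (fun z => tsum_nonneg fun y => mul_nonneg (hKp n x z) (hnn z y))
        (fun z => ?_) hsumn
      show (∑' y, Kpow K n x z * K z y) ≤ Kpow K n x z
      rw [tsum_mul_left]
      exact mul_le_of_le_one_right (hKp n x z) (hsub z)
  have hfs : ∀ n, Summable fun z => Kpow K n x z := by
    intro n
    induction n with
    | zero =>
      apply summable_of_ne_finset_zero (s := {x})
      intro y hy
      simp only [Kpow]
      rw [if_neg]
      intro h
      exact hy (by simp [← h])
    | succ n ih =>
      have hF := hFgen n ih
      have hout := hF.prod_symm.prod
      apply hout.congr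
      intro y
      exact (hKsucc n x y).symm
  have hafub : ∀ n, a (n+1) = ∑' z, Kpow K n x z * ∑' y, K z y := by
    intro n
    have hF := hFgen n (hfs n)
    calc a (n+1) = ∑' y, ∑' z, Kpow K n x z * K z y := by
          simp only [ha]
          exact tsum_congr fun y => hKsucc n x y
      _ = ∑' z, ∑' y, Kpow K n x z * K z y := Summable.tsum_comm hF
      _ = ∑' z, Kpow K n x z * ∑' y, K z y := tsum_congr fun z => tsum_mul_left
  have hamono : ∀ n, a (n+1) ≤ a n := by
    intro n
    rw [hafub n]
    have hsl : Summable fun z => Kpow K n x z * ∑' y, K z y :=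
      (hfs n).of_nonneg_of_le (fun z => mul_nonneg (hKp n x z) (hκnn z))
        (fun z => mul_le_of_le_one_right (hKp n x z) (hsub z))
    calc ∑' z, Kpow K n x z * ∑' y, K z y ≤ ∑' z, Kpow K n x z :=
          Summable.tsum_le_tsum (fun z => mul_le_of_le_one_right (hKp n x z) (hsub z)) hsl (hfs n)
      _ = a n := by simp only [ha]
  have hAnti : Antitone a := antitone_nat_of_succ_le hamono
  have hapos : ∀ n, 0 < a n := by
    intro n
    obtain ⟨N, hN⟩ := eventually_atTop.1 hNa
    by_contra h0
    push_neg at h0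
    have h1 := (hN (max n N) (le_max_right _ _)).2.1
    have h2 : a (max n N) ≤ a n := hAnti (le_max_left _ _)
    linarith
  -- apply Scheffé to get convergence of a(n+1)/a(n)
  have hπs : Summable π := by
    by_contra h
    rw [tsum_eq_zero_of_not_summable h] at hπ1
    norm_num at hπ1
  have hralpha : Tendsto (fun n => a (n+1) / a n) atTop
      (𝓝 (∑' z, π z * ∑' y, K z y)) := by
    have happ := scheffe (fun n z => Kpow K n x z / a n) π (fun z => ∑' y, K z y)
      (fun n z => div_nonneg (hKp n x z) (hapos n).le)
      (fun n => (hfs n).div_const _)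
      (fun n => by
        rw [tsum_div_const]
        have hane : (∑' z, Kpow K n x z) = a n := by simp only [ha]
        rw [hane]
        exact div_self (hapos n).ne')
      hπnn hπs hπ1 hκnn (fun z => hsub z) (fun z => hyagA z)
    apply happ.congr
    intro n
    calc ∑' z, Kpow K n x z / a n * ∑' y, K z y
        = ∑' z, (Kpow K n x z * ∑' y, K z y) / a n := tsum_congr fun z => by ring
      _ = (∑' z, Kpow K n x z * ∑' y, K z y) / a n := tsum_div_const
      _ = a (n+1) / a n := by rw [← hafub n]
  -- the limit equals ρ
  have ha0 : a 0 = 1 := by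
    simp only [ha]
    rw [tsum_eq_single x (fun z hz => by
      simp only [Kpow]
      exact if_neg fun h => hz h.symm)]
    simp [Kpow]
  have hκpos : ∀ z, (0:ℝ) < ∑' y, K z y := by
    intro z
    obtain ⟨n, hn1, hn2⟩ : ∃ n, 0 < Kpow K n z z ∧ 1 ≤ n := by
      obtain ⟨n, h⟩ := ((hpos z z).and (eventually_ge_atTop 1)).exists
      exact ⟨n, h.1, h.2⟩
    obtain ⟨c, hc0, hcm, hsteps⟩ := hchainex n z z hn1
    have h1 : 0 < K (c 0) (c 1) := hsteps 0 (by omega)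
    rw [hc0] at h1
    calc (0:ℝ) < K z (c 1) := h1
      _ ≤ ∑' y, K z y := Summable.le_tsum (hrow z) (c 1) fun w _ => hnn z w
  have hsummκ : Summable fun z => π z * ∑' y, K z y :=
    hπs.of_nonneg_of_le (fun z => mul_nonneg (hπnn z) (hκnn z))
      (fun z => mul_le_of_le_one_right (hπnn z) (hsub z))
  have hαpos : (0:ℝ) < ∑' z, π z * ∑' y, K z y :=
    lt_of_lt_of_le (mul_pos hy₀ (hκpos y₀))
      (Summable.le_tsum hsummκ y₀ fun z _ => mul_nonneg (hπnn z) (hκnn z))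
  have hαρ : (∑' z, π z * ∑' y, K z y) = ρ := by
    have hu : Tendsto (fun n => Real.log (a (n+1)) - Real.log (a n)) atTop
        (𝓝 (Real.log (∑' z, π z * ∑' y, K z y))) := by
      have hlog := ((Real.continuousAt_log hαpos.ne').tendsto).comp hralpha
      apply hlog.congr
      intro n
      simp only [Function.comp]
      rw [Real.log_div (hapos (n+1)).ne' (hapos n).ne']
    have hces := hu.cesaro
    have htel : ∀ n : ℕ, ∑ i ∈ Finset.range n,
        (Real.log (a (i+1)) - Real.log (a i)) = Real.log (a n) := by
      intro n
      rw [Finset.sum_range_sub (fun i => Real.log (a i))]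
      rw [ha0, Real.log_one, sub_zero]
    have h2 : Tendsto (fun n : ℕ => (n:ℝ)⁻¹ * Real.log (a n)) atTop
        (𝓝 (Real.log (∑' z, π z * ∑' y, K z y))) := by
      apply hces.congr
      intro n
      rw [htel n]
    have h3 : Tendsto (fun n : ℕ => (n:ℝ)⁻¹ * Real.log (a n)) atTop
        (𝓝 (Real.log ρ)) := by
      have hco := ((Real.continuousAt_log hρpos.ne').tendsto).comp haroot
      apply hco.congr
      intro n
      simp only [Function.comp]
      rw [Real.log_rpow (hapos n)]
    have hlogeq := tendsto_nhds_unique h2 h3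
    calc (∑' z, π z * ∑' y, K z y) = Real.exp (Real.log (∑' z, π z * ∑' y, K z y)) :=
          (Real.exp_log hαpos).symm
      _ = Real.exp (Real.log ρ) := by rw [hlogeq]
      _ = ρ := Real.exp_log hρpos
  rw [hαρ] at hralpha
  -- now the conclusion, for each y
  intro y
  obtain ⟨m, hm⟩ := (hpos y₀ y).exists
  obtain ⟨c, hc0, hcm, hsteps⟩ := hchainex m y₀ y hm
  set P : ℝ := ∏ i ∈ Finset.range m, K (c i) (c (i+1)) with hP
  have hPpos : 0 < P := Finset.prod_pos fun i hi => hsteps i (Finset.mem_range.1 hi)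
  have hπy : 0 < π y := by
    have hA : Tendsto (fun n => Kpow K (n+m) x y / a (n+m)) atTop (𝓝 (π y)) :=
      (hyagA y).comp (tendsto_add_atTop_nat m)
    have hB : Tendsto (fun n => Kpow K n x y₀ / a n * P) atTop (𝓝 (π y₀ * P)) :=
      (hyagA y₀).mul_const P
    have hle : ∀ᶠ n in atTop,
        Kpow K n x y₀ / a n * P ≤ Kpow K (n+m) x y / a (n+m) := by
      filter_upwards [hchain m c hsteps] with n hn
      rw [hc0, hcm, ← hP] at hn
      have h1 : Kpow K n x y₀ / a n * P = Kpow K n x y₀ * P / a n := by ring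
      rw [h1]
      exact div_le_div₀ (hKp _ x y) hn (hapos (n+m)) (hAnti (Nat.le_add_right n m))
    have hkey : π y₀ * P ≤ π y := le_of_tendsto_of_tendsto hB hA hle
    exact lt_of_lt_of_le (mul_pos hy₀ hPpos) hkey
  have hshift : Tendsto (fun n => Kpow K (n+1) x y / a (n+1)) atTop (𝓝 (π y)) :=
    (hyagA y).comp (tendsto_add_atTop_nat 1)
  have hmain : Tendsto
      (fun n => Kpow K (n+1) x y / a (n+1) * (a (n+1) / a n) / (Kpow K n x y / a n))
      atTop (𝓝 (π y * ρ / π y)) :=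
    (hshift.mul hralpha).div (hyagA y) hπy.ne'
  have hfinal : π y * ρ / π y = ρ := by
    rw [mul_comm, mul_div_assoc, div_self hπy.ne', mul_one]
  rw [hfinal] at hmain
  apply hmain.congr
  intro n
  have h1 : Kpow K (n+1) x y / a (n+1) * (a (n+1) / a n) = Kpow K (n+1) x y / a n := by
    have h2 := (hapos (n+1)).ne'
    field_simp
  rw [h1, div_div_div_comm, div_self (hapos n).ne', div_one]
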